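/- For every n ≥ 4, the positive semidefinite throttling number of the cycle Cₙ equals ⌈√(2n) − 1/2⌉. -/

import Mathlib

open SimpleGraph

/-- Reachability in `G` avoiding the blue set `B` (i.e., within a white component). -/
def offReach {V : Type*} (G : SimpleGraph V) (B : Set V) : V → V → Prop :=
  Relation.ReflTransGen (fun a b => G.Adj a b ∧ a ∉ B ∧ b ∉ B)

/-- The positive semidefinite color change rule: a blue vertex `v` forces a white vertex `w`
if `w` is the unique white neighbor of `v` in the white component of `w` (together with `B`). -/
def psdForces {V : Type*} (G : SimpleGraph V) (B : Set V) (v w : V) : Prop :=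
  v ∈ B ∧ w ∉ B ∧ G.Adj v w ∧
    ∀ u, u ∉ B → G.Adj v u → offReach G B u w → u = w

/-- One round of PSD forcing: perform all possible forces. -/
def psdStep {V : Type*} (G : SimpleGraph V) (B : Set V) : Set V :=
  B ∪ {w | ∃ v, psdForces G B v w}

/-- `S` is a positive semidefinite zero forcing set. -/
def IsPSDForcingSet {V : Type*} (G : SimpleGraph V) (S : Set V) : Prop :=
  ∃ t, (psdStep G)^[t] S = Set.univ

/-- The PSD propagation time of `S`. -/
noncomputable def psdPt {V : Type*} (G : SimpleGraph V) (S : Set V) : ℕ :=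
  sInf {t | (psdStep G)^[t] S = Set.univ}

/-- The PSD throttling number of `G`. -/
noncomputable def psdTh {V : Type*} (G : SimpleGraph V) [Fintype V] : ℕ :=
  sInf {k | ∃ S : Finset V, IsPSDForcingSet G ↑S ∧ k = S.card + psdPt G ↑S}

open scoped Fin.CommRing Fin.NatCast

/-! ### Auxiliary development for the cycle graph -/

namespace PsdAux

variable {n : ℕ}

lemma adj_iff (x y : Fin (n+4)) :
    (cycleGraph (n+4)).Adj x y ↔ x = y + 1 ∨ y = x + 1 := by
  rw [cycleGraph_adj (n := n+2)]
  constructor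
  · rintro (h | h)
    · left; rw [sub_eq_iff_eq_add] at h; rw [h]; ring
    · right; rw [sub_eq_iff_eq_add] at h; rw [h]; ring
  · rintro (h | h)
    · left; rw [sub_eq_iff_eq_add, h]; ring
    · right; rw [sub_eq_iff_eq_add, h]; ring

/-- The closed ball of radius `t` around `s` in the cycle. -/
def ball (s : Fin (n+4)) (t : ℕ) : Set (Fin (n+4)) :=
  {x | ∃ j ≤ t, x = s + (j : Fin (n+4)) ∨ x = s - (j : Fin (n+4))}

lemma mem_ball_self (s : Fin (n+4)) (t : ℕ) : s ∈ ball s t :=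
  ⟨0, Nat.zero_le _, by left; simp⟩

lemma ball_mono (s : Fin (n+4)) {t t' : ℕ} (h : t ≤ t') : ball s t ⊆ ball s t' := by
  rintro x ⟨j, hj, hx⟩; exact ⟨j, hj.trans h, hx⟩

lemma ball_zero (s : Fin (n+4)) : ball s 0 = {s} := by
  ext x
  constructor
  · rintro ⟨j, hj, hx | hx⟩ <;> interval_cases j <;> simpa using hx
  · rintro rfl; exact mem_ball_self _ 0

/-- Moving one step from a ball member lands in the next ball. -/
lemma ball_succ_of_step {s v w : Fin (n+4)} {j : ℕ} (hv : v ∈ ball s j)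
    (hw : w = v + 1 ∨ w = v - 1) : w ∈ ball s (j+1) := by
  obtain ⟨i, hi, hv | hv⟩ := hv
  · rcases hw with rfl | rfl
    · exact ⟨i+1, by omega, Or.inl (by rw [hv]; push_cast; ring)⟩
    · rcases i with _ | i
      · exact ⟨1, by omega, Or.inr (by rw [hv]; push_cast; ring)⟩
      · exact ⟨i, by omega, Or.inl (by rw [hv]; push_cast; ring)⟩
  · rcases hw with rfl | rfl
    · rcases i with _ | i
      · exact ⟨1, by omega, Or.inl (by rw [hv]; push_cast; ring)⟩
      · exact ⟨i, by omega, Or.inr (by rw [hv]; push_cast; ring)⟩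
    · exact ⟨i+1, by omega, Or.inr (by rw [hv]; push_cast; ring)⟩

lemma val_injective (x y : Fin (n+4)) (h : x.val = y.val) : x = y := Fin.val_injective h

/-- Key forcing lemma: on a cycle, if there are at least two blue vertices, then any
white neighbor of a blue vertex gets forced. -/
lemma force {B : Set (Fin (n+4))} {v b w : Fin (n+4)}
    (hv : v ∈ B) (hb : b ∈ B) (hbv : b ≠ v) (hw : w ∉ B)
    (hadj : (cycleGraph (n+4)).Adj v w) :
    w ∈ psdStep (cycleGraph (n+4)) B := by
  refine Or.inr ⟨v, hv, hw, hadj, ?_⟩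
  intro u hu hadju hreach
  -- position relative to v
  set p : Fin (n+4) → ℕ := fun x => (x - v).val with hp
  have hp0 : ∀ x : Fin (n+4), p x = 0 ↔ x = v := by
    intro x
    rw [show p x = (x - v).val from rfl, show (0 : ℕ) = (0 : Fin (n+4)).val from rfl]
    constructor
    · intro h; have := Fin.val_injective h; rwa [sub_eq_zero] at this
    · rintro rfl; rw [sub_self]
  have hplt : ∀ x : Fin (n+4), p x < n+4 := fun x => (x - v).isLt
  have hpinj : ∀ x y : Fin (n+4), p x = p y → x = y := by
    intro x y h
    have := Fin.val_injective h
    exact sub_left_injective this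
  set β := p b with hβ
  have hβ0 : β ≠ 0 := fun h => hbv ((hp0 b).mp h)
  -- invariance of (p · < β) along white edges
  have hstep : ∀ x y : Fin (n+4), x ∉ B → y ∉ B → x = y + 1 → (p x < β ↔ p y < β) := by
    intro x y hx hy hxy
    have hx0 : p x ≠ 0 := fun h => hx (((hp0 x).mp h) ▸ hv)
    have hy0 : p y ≠ 0 := fun h => hy (((hp0 y).mp h) ▸ hv)
    have hxb : p x ≠ β := fun h => hx ((hpinj x b h) ▸ hb)
    have hyb : p y ≠ β := fun h => hy ((hpinj y b h) ▸ hb)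
    have hval : p x = (p y + 1) % (n+4) := by
      rw [show p x = (x - v).val from rfl, hxy,
        show y + 1 - v = (y - v) + 1 by ring, Fin.val_add]
      rfl
    have := hplt y
    rcases Nat.lt_or_ge (p y + 1) (n+4) with h | h
    · rw [Nat.mod_eq_of_lt h] at hval; omega
    · have : p y + 1 = n+4 := by omega
      rw [this, Nat.mod_self] at hval; omega
  -- invariance along offReach
  have hinv : ∀ x y : Fin (n+4), offReach (cycleGraph (n+4)) B x y → x ∉ B →
      (p x < β ↔ p y < β) := by
    intro x y h hx
    induction h with
    | refl => exact Iff.rfl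
    | @tail c d hcd hstep' ih =>
        obtain ⟨hadj', hc, hd⟩ := hstep'
        rcases (adj_iff c d).mp hadj' with h' | h'
        · exact ih.trans (hstep c d hc hd h')
        · exact ih.trans (hstep d c hd hc h').symm
  by_contra hne
  have huB : u ∉ B := hu
  have hiff := hinv u w hreach huB
  -- u and w are the two distinct neighbors of v, so {p u, p w} = {1, n+3}
  have hval1 : ∀ x : Fin (n+4), x = v + 1 → p x = 1 := by
    intro x hx
    rw [show p x = (x - v).val from rfl, hx]
    simp
  have hvalN : ∀ x : Fin (n+4), v = x + 1 → p x = n + 3 := by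
    intro x hx
    rw [show p x = (x - v).val from rfl, show x - v = -1 by rw [hx]; ring]
    exact Fin.coe_neg_one
  have hpu : p u = 1 ∨ p u = n + 3 := by
    rcases (adj_iff v u).mp hadju with h | h
    · right; exact hvalN u h
    · left; exact hval1 u h
  have hpw : p w = 1 ∨ p w = n + 3 := by
    rcases (adj_iff v w).mp hadj with h | h
    · right; exact hvalN w h
    · left; exact hval1 w h
  have hpuw : p u ≠ p w := fun h => hne (hpinj u w h)
  have hβu : β ≠ p u := fun h => huB ((hpinj b u h) ▸ hb)
  have hβw : β ≠ p w := fun h => hw ((hpinj b w h) ▸ hb)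
  have hβlt : β < n+4 := hplt b
  rcases hpu with h1 | h1 <;> rcases hpw with h2 | h2 <;> rw [h1, h2] at hiff <;> omega

lemma subset_psdStep {V : Type*} (G : SimpleGraph V) (B : Set V) : B ⊆ psdStep G B :=
  Set.subset_union_left

lemma psdStep_subset {V : Type*} (G : SimpleGraph V) (B : Set V) :
    psdStep G B ⊆ B ∪ {w | ∃ v ∈ B, G.Adj v w} := by
  rintro w (hw | ⟨v, hv, _, hadj, _⟩)
  · exact Or.inl hw
  · exact Or.inr ⟨v, hv, hadj⟩

lemma iterate_subset_balls (S : Finset (Fin (n+4))) (t : ℕ) :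
    (psdStep (cycleGraph (n+4)))^[t] ↑S ⊆ {x | ∃ s ∈ S, x ∈ ball s t} := by
  induction t with
  | zero => intro x hx; exact ⟨x, hx, mem_ball_self x 0⟩
  | succ t ih =>
      rw [Function.iterate_succ_apply']
      intro x hx
      rcases psdStep_subset _ _ hx with h | ⟨v, hv, hadj⟩
      · obtain ⟨s, hs, hball⟩ := ih h
        exact ⟨s, hs, ball_mono s (Nat.le_succ t) hball⟩
      · obtain ⟨s, hs, hball⟩ := ih hv
        refine ⟨s, hs, ball_succ_of_step hball ?_⟩
        rcases (adj_iff v x).mp hadj with h' | h'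
        · right; rw [h']; ring
        · left; exact h'

lemma count_bound (S : Finset (Fin (n+4))) (t : ℕ)
    (h : ∀ x : Fin (n+4), ∃ s ∈ S, x ∈ ball s t) :
    n + 4 ≤ S.card * (2 * t + 1) := by
  classical
  set F : Fin (n+4) → Finset (Fin (n+4)) := fun s =>
    (Finset.range (t+1)).image (fun j : ℕ => s + (j : Fin (n+4))) ∪
    (Finset.Icc 1 t).image (fun j : ℕ => s - (j : Fin (n+4))) with hF
  have hmem : ∀ s x, x ∈ ball s t → x ∈ F s := by
    rintro s x ⟨j, hj, rfl | rfl⟩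
    · exact Finset.mem_union_left _
        (Finset.mem_image.mpr ⟨j, Finset.mem_range.mpr (by omega), rfl⟩)
    · rcases Nat.eq_zero_or_pos j with rfl | hj0
      · refine Finset.mem_union_left _
          (Finset.mem_image.mpr ⟨0, Finset.mem_range.mpr (by omega), ?_⟩)
        simp
      · exact Finset.mem_union_right _
          (Finset.mem_image.mpr ⟨j, Finset.mem_Icc.mpr ⟨hj0, hj⟩, rfl⟩)
  have hFcard : ∀ s, (F s).card ≤ 2 * t + 1 := by
    intro s
    refine (Finset.card_union_le _ _).trans ?_
    have h1 := Finset.card_image_le (s := Finset.range (t+1))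
      (f := fun j : ℕ => s + (j : Fin (n+4)))
    have h2 := Finset.card_image_le (s := Finset.Icc 1 t)
      (f := fun j : ℕ => s - (j : Fin (n+4)))
    rw [Finset.card_range] at h1
    rw [Nat.card_Icc] at h2
    omega
  have huniv : (Finset.univ : Finset (Fin (n+4))) ⊆ S.biUnion F := by
    intro x _
    obtain ⟨s, hs, hball⟩ := h x
    exact Finset.mem_biUnion.mpr ⟨s, hs, hmem s x hball⟩
  calc n + 4 = (Finset.univ : Finset (Fin (n+4))).card := by simp
    _ ≤ (S.biUnion F).card := Finset.card_le_card huniv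
    _ ≤ ∑ s ∈ S, (F s).card := Finset.card_biUnion_le
    _ ≤ ∑ _s ∈ S, (2 * t + 1) := Finset.sum_le_sum (fun s _ => hFcard s)
    _ = S.card * (2 * t + 1) := by rw [Finset.sum_const, smul_eq_mul]

lemma grow (S : Finset (Fin (n+4))) {s0 s1 : Fin (n+4)}
    (h0 : s0 ∈ S) (h1 : s1 ∈ S) (hne : s0 ≠ s1) (t : ℕ) :
    {x : Fin (n+4) | ∃ s ∈ S, x ∈ ball s t} ⊆ (psdStep (cycleGraph (n+4)))^[t] ↑S := by
  induction t with
  | zero =>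
      rintro x ⟨s, hs, hball⟩
      rw [ball_zero] at hball
      rw [hball]
      exact hs
  | succ t ih =>
      rintro x ⟨s, hs, j, hj, hx⟩
      rw [Function.iterate_succ_apply']
      rcases Nat.lt_or_ge j (t+1) with hjt | hjt
      · exact subset_psdStep _ _ (ih ⟨s, hs, j, by omega, hx⟩)
      · have hjeq : j = t + 1 := by omega
        subst hjeq
        -- x is at distance exactly t+1; its neighbor y is at distance t
        obtain ⟨y, hy, hxy⟩ : ∃ y, y ∈ ball s t ∧ (x = y + 1 ∨ x = y - 1) := by
          rcases hx with rfl | rfl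
          · exact ⟨s + (t : Fin (n+4)), ⟨t, le_refl t, Or.inl rfl⟩,
              Or.inl (by push_cast; ring)⟩
          · exact ⟨s - (t : Fin (n+4)), ⟨t, le_refl t, Or.inr rfl⟩,
              Or.inr (by push_cast; ring)⟩
        have hyB : y ∈ (psdStep (cycleGraph (n+4)))^[t] ↑S := ih ⟨s, hs, hy⟩
        by_cases hxB : x ∈ (psdStep (cycleGraph (n+4)))^[t] ↑S
        · exact subset_psdStep _ _ hxB
        · have hSB : (↑S : Set (Fin (n+4))) ⊆ (psdStep (cycleGraph (n+4)))^[t] ↑S := by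
            intro z hz; exact ih ⟨z, hz, mem_ball_self z t⟩
          have hadj : (cycleGraph (n+4)).Adj y x := by
            rw [adj_iff]
            rcases hxy with h' | h'
            · right; exact h'
            · left; rw [h']; ring
          by_cases hs0 : s0 = y
          · exact force hyB (hSB h1) (fun h => hne (hs0.trans h.symm)) hxB hadj
          · exact force hyB (hSB h0) hs0 hxB hadj

lemma cover (t k : ℕ) (hk : n + 4 ≤ k * (2*t+1)) (x : Fin (n+4)) :
    ∃ s ∈ (Finset.range k).image (fun j : ℕ => ((j*(2*t+1) : ℕ) : Fin (n+4))),
      x ∈ ball s t := by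
  set g := 2*t+1 with hg
  have hg0 : 0 < g := by omega
  have hilt : x.val < n+4 := x.isLt
  have hxi : ((x.val : ℕ) : Fin (n+4)) = x := Fin.cast_val_eq_self x
  obtain ⟨q, r, hrlt, hiq⟩ : ∃ q r, r < g ∧ q * g + r = x.val :=
    ⟨x.val / g, x.val % g, Nat.mod_lt _ hg0,
      by rw [mul_comm]; exact Nat.div_add_mod x.val g⟩
  have hAg : (q+1)*g = q*g + g := by ring
  have hqk : q < k := by
    by_contra hcon
    push_neg at hcon
    have h1 : k * g ≤ q * g := Nat.mul_le_mul_right g hcon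
    omega
  by_cases hrt : r ≤ t
  · refine ⟨((q*g : ℕ) : Fin (n+4)),
      Finset.mem_image.mpr ⟨q, Finset.mem_range.mpr hqk, rfl⟩, r, hrt, Or.inl ?_⟩
    rw [← hxi, show x.val = q*g + r from hiq.symm]
    push_cast; ring
  · by_cases hnext : (q+1)*g < n+4
    · have hq1k : q+1 < k := by
        by_contra hcon
        push_neg at hcon
        have h1 : k * g ≤ (q+1) * g := Nat.mul_le_mul_right g hcon
        omega
      refine ⟨(((q+1)*g : ℕ) : Fin (n+4)),
        Finset.mem_image.mpr ⟨q+1, Finset.mem_range.mpr hq1k, rfl⟩, g - r, by omega,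
        Or.inr ?_⟩
      rw [eq_sub_iff_add_eq, ← hxi, ← Nat.cast_add,
        show x.val + (g - r) = (q+1)*g from by omega]
    · -- wrap around to the blue vertex 0
      refine ⟨((0*g : ℕ) : Fin (n+4)),
        Finset.mem_image.mpr ⟨0, Finset.mem_range.mpr (by omega), rfl⟩, (n+4) - x.val,
        by omega, Or.inr ?_⟩
      rw [eq_sub_iff_add_eq, show (0*g : ℕ) = 0 from by ring]
      have hmerge : x + (((n+4) - x.val : ℕ) : Fin (n+4))
          = ((x.val + ((n+4) - x.val) : ℕ) : Fin (n+4)) := by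
        rw [Nat.cast_add, hxi]
      rw [hmerge, show x.val + ((n+4) - x.val) = n+4 from by omega]
      simp

lemma consec_nonneg (x : ℤ) : 0 ≤ x * (x - 1) := by
  rcases le_or_gt 1 x with h | h
  · exact mul_nonneg (by omega) (by omega)
  · nlinarith [mul_nonneg (show (0:ℤ) ≤ -x by omega) (show (0:ℤ) ≤ 1 - x by omega)]

end PsdAux

theorem stmt_10 (n : ℕ) (hn : 4 ≤ n) :
    (psdTh (SimpleGraph.cycleGraph n) : ℤ) = ⌈Real.sqrt (2 * n) - 1 / 2⌉ := by
  classical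
  obtain ⟨N, rfl⟩ : ∃ N, n = N + 4 := ⟨n - 4, by omega⟩
  clear hn
  -- the optimal value
  have hex : ∃ m, 2*(N+4) ≤ m*(m+1) := ⟨2*(N+4), by nlinarith⟩
  set m := Nat.find hex with hmdef
  have hm1 : 2*(N+4) ≤ m*(m+1) := Nat.find_spec hex
  have hm3 : 3 ≤ m := by
    by_contra h
    push_neg at h
    have : m*(m+1) ≤ 6 := by nlinarith
    omega
  have hmmin : (m-1)*m < 2*(N+4) := by
    have h := Nat.find_min hex (show m - 1 < m by omega)
    push_neg at h
    rw [show m - 1 + 1 = m from by omega] at h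
    exact h
  set t := m / 2 with htdef
  set k := m - t with hkdef
  have hsplit : m = 2*t ∨ m = 2*t + 1 := by omega
  have hkg : 2*(k*(2*t+1)) = m*(m+1) := by
    rcases hsplit with h | h
    · rw [show k = t from by omega, h]; ring
    · rw [show k = t+1 from by omega, h]; ring
  have hcov : N+4 ≤ k*(2*t+1) := by
    have h2 : 2*(N+4) ≤ 2*(k*(2*t+1)) := by rw [hkg]; exact hm1
    omega
  have hmmz : ((m:ℤ)-1)*(m:ℤ) + 1 ≤ 2*((N:ℤ)+4) := by
    have h1 : (m-1)*m + 1 ≤ 2*(N+4) := hmmin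
    zify [show 1 ≤ m from by omega] at h1
    exact h1
  have hglt : 2*t+1 < N+4 := by
    have hgz : 2*(t:ℤ)+1 < (N:ℤ)+4 := by
      rcases hsplit with h | h
      · have hz : (m:ℤ) = 2*(t:ℤ) := by exact_mod_cast h
        have ht2 : (2:ℤ) ≤ t := by
          have : 2 ≤ t := by omega
          exact_mod_cast this
        nlinarith [hmmz, hz]
      · have hz : (m:ℤ) = 2*(t:ℤ)+1 := by exact_mod_cast h
        have ht1 : (1:ℤ) ≤ t := by
          have : 1 ≤ t := by omega
          exact_mod_cast this
        nlinarith [hmmz, hz]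
    exact_mod_cast hgz
  -- the evenly spaced forcing set
  set S : Finset (Fin (N+4)) :=
    (Finset.range k).image (fun j : ℕ => ((j*(2*t+1) : ℕ) : Fin (N+4))) with hSdef
  have hk2 : 2 ≤ k := by omega
  have h0S : ((0*(2*t+1) : ℕ) : Fin (N+4)) ∈ S :=
    Finset.mem_image.mpr ⟨0, Finset.mem_range.mpr (by omega), rfl⟩
  have h1S : ((1*(2*t+1) : ℕ) : Fin (N+4)) ∈ S :=
    Finset.mem_image.mpr ⟨1, Finset.mem_range.mpr (by omega), rfl⟩
  have hne : ((0*(2*t+1) : ℕ) : Fin (N+4)) ≠ ((1*(2*t+1) : ℕ) : Fin (N+4)) := by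
    intro h
    have := congrArg Fin.val h
    rw [Fin.val_cast_of_lt (show 0*(2*t+1) < N+4 by omega),
      Fin.val_cast_of_lt (show 1*(2*t+1) < N+4 by omega)] at this
    omega
  have hcover : ∀ x : Fin (N+4), ∃ s ∈ S, x ∈ PsdAux.ball s t :=
    fun x => PsdAux.cover t k hcov x
  have hforce : (psdStep (cycleGraph (N+4)))^[t] ↑S = Set.univ := by
    apply Set.eq_univ_of_univ_subset
    intro x _
    exact PsdAux.grow S h0S h1S hne t (hcover x)
  -- upper bound
  have hpt : psdPt (cycleGraph (N+4)) ↑S ≤ t := Nat.sInf_le hforce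
  have hcard : S.card ≤ k := by
    rw [hSdef]
    exact (Finset.card_image_le).trans (by rw [Finset.card_range])
  have hup : psdTh (cycleGraph (N+4)) ≤ m := by
    refine le_trans (Nat.sInf_le ⟨S, ⟨t, hforce⟩, rfl⟩) ?_
    omega
  -- lower bound
  have hlow : m ≤ psdTh (cycleGraph (N+4)) := by
    refine le_csInf ⟨S.card + psdPt (cycleGraph (N+4)) ↑S, S, ⟨t, hforce⟩, rfl⟩ ?_
    rintro c ⟨S', hFS, rfl⟩
    set t' := psdPt (cycleGraph (N+4)) ↑S' with ht'
    have hmem : (psdStep (cycleGraph (N+4)))^[t'] ↑S' = Set.univ := Nat.sInf_mem hFS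
    have hcount : N+4 ≤ S'.card * (2*t'+1) := by
      refine PsdAux.count_bound S' t' (fun x => ?_)
      exact PsdAux.iterate_subset_balls S' t' (by rw [hmem]; trivial)
    have harith : 2*(N+4) ≤ (S'.card + t') * ((S'.card + t') + 1) := by
      have hz : (2*((N:ℤ)+4)) ≤ ((S'.card:ℤ) + t') * (((S'.card:ℤ) + t') + 1) := by
        have h1 : ((N:ℤ)+4) ≤ (S'.card:ℤ) * (2*(t':ℤ)+1) := by exact_mod_cast hcount
        nlinarith [PsdAux.consec_nonneg ((S'.card:ℤ) - (t':ℤ))]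
      exact_mod_cast hz
    exact Nat.find_le harith
  have hth : psdTh (cycleGraph (N+4)) = m := le_antisymm hup hlow
  -- final conversion to the ceiling expression
  rw [hth]
  have hmmR : ((m:ℝ) - 1)*(m:ℝ) + 1 ≤ 2*((N:ℝ)+4) := by exact_mod_cast hmmz
  have hm1R : 2*((N:ℝ)+4) ≤ (m:ℝ)*((m:ℝ)+1) := by exact_mod_cast hm1
  have hm3R : (3:ℝ) ≤ (m:ℝ) := by exact_mod_cast hm3
  symm
  rw [Int.ceil_eq_iff]
  constructor
  · have h1 : (m:ℝ) - 1/2 < Real.sqrt (2 * (((N+4 : ℕ)) : ℝ)) := by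
      refine (Real.lt_sqrt (by linarith)).mpr ?_
      push_cast
      nlinarith [hmmR]
    push_cast at h1 ⊢
    linarith
  · have h2 : Real.sqrt (2 * (((N+4 : ℕ)) : ℝ)) ≤ (m:ℝ) + 1/2 := by
      refine Real.sqrt_le_iff.mpr ⟨by linarith, ?_⟩
      push_cast
      nlinarith [hm1R]
    push_cast at h2 ⊢
    linarith
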